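/- arXiv:1108.5264 — 6 statements merged into one kernel-verified Lean document; each statement's English description precedes it below -/
import Mathlib

section
/- Let c be a d×d real correlation matrix (symmetric positive semidefinite with all diagonal entries equal to 1) and let e_i denote the matrix with a 1 in entry (i,i) and 0 elsewhere. Then the matrix c − c e_i c is symmetric positive semidefinite, and its i-th row and i-th column are zero. -/
open Matrix

lemma cec_apply (d : ℕ) (c : Matrix (Fin d) (Fin d) ℝ) (i k l : Fin d) :
    ((c * Matrix.single i i 1 * c : Matrix (Fin d) (Fin d) ℝ)) k l = c k i * c i l := by
  simp [Matrix.mul_apply, Matrix.single, ite_and, Finset.mul_sum,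
    Finset.sum_ite_eq, Finset.sum_ite_eq']

/-- For a correlation matrix `c` (symmetric PSD with unit diagonal), the matrix
`c - c e_i c` is PSD and its `i`-th row and column vanish. -/
theorem stmt0 (d : ℕ) (c : Matrix (Fin d) (Fin d) ℝ)
    (hc : c.PosSemidef) (hdiag : ∀ i, c i i = 1) (i : Fin d) :
    (c - c * Matrix.single i i 1 * c).PosSemidef ∧
    (∀ j, ((c - c * Matrix.single i i 1 * c) : Matrix (Fin d) (Fin d) ℝ) i j = 0) ∧
    (∀ j, ((c - c * Matrix.single i i 1 * c) : Matrix (Fin d) (Fin d) ℝ) j i = 0) := by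
  have hsymm : ∀ k l, c k l = c l k := fun k l => by simpa using hc.1.apply l k
  refine ⟨.of_dotProduct_mulVec_nonneg ?_ ?_, ?_, ?_⟩
  · -- Hermitian
    ext k l
    simp only [conjTranspose_apply, Matrix.sub_apply, cec_apply, star_trivial]
    rw [hsymm k l, hsymm k i, hsymm i l]
    ring
  · -- quadratic form nonneg
    intro x
    obtain ⟨s, hss0, hspsd⟩ : ∃ s : Matrix (Fin d) (Fin d) ℝ, s * s = c ∧ s.PosSemidef := by
      open scoped MatrixOrder in
      exact ⟨CFC.sqrt c, CFC.sqrt_mul_sqrt_self c hc.nonneg, (CFC.sqrt_nonneg c).posSemidef⟩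
    have hss : s * s = c := hss0
    have hsh : ∀ k l, s k l = s l k := fun k l =>
      by simpa using hspsd.1.apply l k
    set z : Fin d → ℝ := s *ᵥ x with hz
    have hq : dotProduct x (c *ᵥ x) = ∑ j, z j ^ 2 := by
      rw [← hss, ← Matrix.mulVec_mulVec, dotProduct_mulVec]
      have : x ᵥ* s = z := by
        ext j
        simp [Matrix.vecMul, Matrix.mulVec, hz, dotProduct, mul_comm]
        exact Finset.sum_congr rfl fun k _ => by rw [hsh j k, mul_comm]
      rw [this]
      simp [dotProduct, sq, ← hz]
    have hci : (c *ᵥ x) i = ∑ j, s i j * z j := by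
      rw [← hss, ← Matrix.mulVec_mulVec]
      simp [Matrix.mulVec, dotProduct, hz]
    have hcs : ((c *ᵥ x) i) ^ 2 ≤ ∑ j, z j ^ 2 := by
      calc ((c *ᵥ x) i) ^ 2 = (∑ j, s i j * z j) ^ 2 := by rw [hci]
        _ ≤ (∑ j, (s i j) ^ 2) * ∑ j, z j ^ 2 :=
            Finset.sum_mul_sq_le_sq_mul_sq _ _ _
        _ = (∑ j, z j ^ 2) := by
            have : ∑ j, (s i j) ^ 2 = (1 : ℝ) := by
              have : (s * s) i i = ∑ j, (s i j) ^ 2 := by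
                simp [Matrix.mul_apply, sq]
                exact Finset.sum_congr rfl fun j _ => by rw [hsh j i]
              rw [hss] at this
              rw [← this, hdiag]
            rw [this, one_mul]
    have hquad : dotProduct x ((c * Matrix.single i i 1 * c) *ᵥ x)
        = ((c *ᵥ x) i) ^ 2 := by
      simp only [dotProduct, Matrix.mulVec, cec_apply]
      have : ∀ k, (∑ l, (c k i * c i l) * x l) = c k i * (c *ᵥ x) i := by
        intro k
        simp [Matrix.mulVec, dotProduct, Finset.mul_sum, mul_assoc]
      calc ∑ k, x k * (fun l => c k i * c i l) ⬝ᵥ x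
          = ∑ k, x k * (c k i * (c *ᵥ x) i) := by
            refine Finset.sum_congr rfl fun k _ => ?_
            rw [show (fun l => c k i * c i l) ⬝ᵥ x = ∑ l, (c k i * c i l) * x l from rfl,
              this k]
        _ = (∑ k, x k * c k i) * (c *ᵥ x) i := by
            rw [Finset.sum_mul]; exact Finset.sum_congr rfl fun k _ => by ring
        _ = ((c *ᵥ x) i) ^ 2 := by
            have : ∑ k, x k * c k i = (c *ᵥ x) i := by
              simp [Matrix.mulVec, dotProduct]
              exact Finset.sum_congr rfl fun k _ => by rw [hsymm k i, mul_comm]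
            rw [this, sq]
    rw [star_trivial, Matrix.sub_mulVec, dotProduct_sub, hquad, hq]
    linarith
  · intro j
    simp [cec_apply, hdiag]
  · intro j
    simp [cec_apply, hdiag]
end

section
/- Let c be a d×d correlation matrix, √c its positive semidefinite square root, and 1 ≤ n ≤ d. Then I_d − √c e_n √c is symmetric positive semidefinite and is idempotent, i.e. (I_d − √c e_n √c)² = I_d − √c e_n √c; equivalently its PSD square root equals itself. -/
open Matrix

section

open scoped ComplexOrder

/-- The positive semidefinite square root of a positive semidefinite matrix (the definition
of `Matrix.PosSemidef.sqrt` in the older Mathlib, which has since been removed). -/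
noncomputable def Matrix.PosSemidef.sqrt {n : Type*} [Fintype n] [DecidableEq n] {𝕜 : Type*}
    [RCLike 𝕜] {A : Matrix n n 𝕜} (hA : A.PosSemidef) : Matrix n n 𝕜 :=
  hA.1.eigenvectorUnitary.1 * diagonal ((↑) ∘ (√·) ∘ hA.1.eigenvalues) *
  (star hA.1.eigenvectorUnitary : Matrix n n 𝕜)

end

theorem Matrix.PosSemidef.sqrt_isHermitian_aux {d : ℕ} {c : Matrix (Fin d) (Fin d) ℝ}
    (hc : c.PosSemidef) : hc.sqrtᴴ = hc.sqrt := by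
  unfold Matrix.PosSemidef.sqrt
  simp only [conjTranspose_mul, star_eq_conjTranspose, conjTranspose_conjTranspose,
    diagonal_conjTranspose, mul_assoc, star_trivial]

theorem Matrix.PosSemidef.sqrt_mul_self_aux {d : ℕ} {c : Matrix (Fin d) (Fin d) ℝ}
    (hc : c.PosSemidef) : hc.sqrt * hc.sqrt = c := by
  unfold Matrix.PosSemidef.sqrt
  have hU : (star hc.1.eigenvectorUnitary : Matrix (Fin d) (Fin d) ℝ) *
      hc.1.eigenvectorUnitary.1 = 1 := Unitary.coe_star_mul_self _
  have hD : diagonal ((↑) ∘ (√·) ∘ hc.1.eigenvalues) * diagonal ((↑) ∘ (√·) ∘ hc.1.eigenvalues)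
      = diagonal (RCLike.ofReal ∘ hc.1.eigenvalues : Fin d → ℝ) := by
    rw [diagonal_mul_diagonal]
    congr 1
    funext i
    simp [Real.mul_self_sqrt (hc.eigenvalues_nonneg i)]
  conv_rhs => rw [hc.1.spectral_theorem, Unitary.conjStarAlgAut_apply]
  calc _ = hc.1.eigenvectorUnitary.1 * (diagonal ((↑) ∘ (√·) ∘ hc.1.eigenvalues) *
        ((star hc.1.eigenvectorUnitary : Matrix (Fin d) (Fin d) ℝ) *
        hc.1.eigenvectorUnitary.1) * diagonal ((↑) ∘ (√·) ∘ hc.1.eigenvalues)) *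
        (star hc.1.eigenvectorUnitary : Matrix (Fin d) (Fin d) ℝ) := by
          simp only [mul_assoc]; rfl
    _ = _ := by rw [hU, mul_one, hD]

/-- For a correlation matrix `c`, the matrix `I - √c e_n √c` is symmetric positive
semidefinite and idempotent (hence equal to its own PSD square root). -/
theorem stmt3 (d : ℕ) (c : Matrix (Fin d) (Fin d) ℝ) (hc : c.PosSemidef)
    (hdiag : ∀ i, c i i = 1) (n : Fin d) :
    ((1 : Matrix (Fin d) (Fin d) ℝ) - hc.sqrt * Matrix.single n n 1 * hc.sqrt).PosSemidef ∧
    ((1 : Matrix (Fin d) (Fin d) ℝ) - hc.sqrt * Matrix.single n n 1 * hc.sqrt) *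
        ((1 : Matrix (Fin d) (Fin d) ℝ) - hc.sqrt * Matrix.single n n 1 * hc.sqrt)
      = (1 : Matrix (Fin d) (Fin d) ℝ) - hc.sqrt * Matrix.single n n 1 * hc.sqrt := by
  set s := hc.sqrt with hs
  set E : Matrix (Fin d) (Fin d) ℝ := Matrix.single n n 1 with hE
  have hsH : sᴴ = s := hc.sqrt_isHermitian_aux
  have hEc : E * c = Matrix.of fun i j => if i = n then c n j else 0 := by
    ext i j
    simp [hE, Matrix.mul_apply, Matrix.single, ite_and]
    aesop
  have hEcE : E * c * E = E := by
    rw [hEc]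
    ext i j
    simp [hE, Matrix.mul_apply, Matrix.single, ite_and]
    rcases eq_or_ne i n with h | h <;> rcases eq_or_ne n j with h2 | h2 <;>
      simp [h, h2, hdiag n] <;> aesop
  have hPP : (s * E * s) * (s * E * s) = s * E * s := by
    calc (s * E * s) * (s * E * s) = s * (E * (s * s) * E) * s := by noncomm_ring
    _ = s * E * s := by rw [hc.sqrt_mul_self_aux, hEcE]
  have hidem : ((1 : Matrix (Fin d) (Fin d) ℝ) - s * E * s) *
      ((1 : Matrix (Fin d) (Fin d) ℝ) - s * E * s)
      = (1 : Matrix (Fin d) (Fin d) ℝ) - s * E * s := by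
    have : ((1 : Matrix (Fin d) (Fin d) ℝ) - s * E * s) *
        ((1 : Matrix (Fin d) (Fin d) ℝ) - s * E * s)
        = 1 - s * E * s - s * E * s + (s * E * s) * (s * E * s) := by noncomm_ring
    rw [this, hPP]; noncomm_ring
  have hEH : Eᴴ = E := by
    ext i j
    simp [hE, Matrix.conjTranspose_apply, Matrix.single, and_comm]
  have hsT : sᵀ = s := hsH
  have hET : Eᵀ = E := hEH
  have hQH : ((1 : Matrix (Fin d) (Fin d) ℝ) - s * E * s)ᴴ
      = (1 : Matrix (Fin d) (Fin d) ℝ) - s * E * s := by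
    simp only [Matrix.conjTranspose_sub, Matrix.conjTranspose_one, Matrix.conjTranspose_mul,
      hsH, hEH, hsT, hET, Matrix.transpose_mul, mul_assoc]
  refine ⟨?_, hidem⟩
  have := Matrix.posSemidef_conjTranspose_mul_self
    ((1 : Matrix (Fin d) (Fin d) ℝ) - s * E * s)
  rwa [hQH, hidem] at this
end

section
/- Let κ = diag(κ_1,...,κ_d) with κ_i ≥ 0 and let c be a d×d correlation matrix such that κc + cκ is positive semidefinite. Then for every initial condition x ∈ C_d(R), the solution of the linear ODE x'(t) = κ(c − x(t)) + (c − x(t))κ remains in the set of correlation matrices for all t ≥ 0. -/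
open Matrix

/-- A correlation matrix: symmetric positive semidefinite with unit diagonal. -/
def IsCorrelation {d : ℕ} (x : Matrix (Fin d) (Fin d) ℝ) : Prop :=
  x.PosSemidef ∧ ∀ i, x i i = 1

/-- Scalar linear ODE `y' = a (b - y)` has the explicit solution
`y t = b + exp (-(a t)) (y 0 - b)`. -/
lemma scalar_sol (a b : ℝ) (y : ℝ → ℝ) (hy : ∀ t, HasDerivAt y (a * (b - y t)) t) (t : ℝ) :
    y t = b + Real.exp (-(a * t)) * (y 0 - b) := by
  set z : ℝ → ℝ := fun s => Real.exp (a * s) * (y s - b) with hz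
  have hzd : ∀ s, HasDerivAt z 0 s := by
    intro s
    have h1 : HasDerivAt (fun u : ℝ => a * u) a s := by
      simpa using (hasDerivAt_id s).const_mul a
    have h2 : HasDerivAt (fun u => Real.exp (a * u)) (Real.exp (a * s) * a) s := h1.exp
    have h3 : HasDerivAt (fun u => y u - b) (a * (b - y s)) s := (hy s).sub_const b
    have := h2.mul h3
    convert this using 1
    all_goals first | rfl | ring
  have hconst : z t = z 0 := by
    refine is_const_of_deriv_eq_zero (fun u => (hzd u).differentiableAt) (fun u => (hzd u).deriv) t 0
  have hz0 : z 0 = y 0 - b := by simp [hz]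
  have hne : Real.exp (a * t) ≠ 0 := Real.exp_ne_zero _
  have h : Real.exp (a * t) * (y t - b) = y 0 - b := by
    rw [← hz0, ← hconst]
  have : y t - b = Real.exp (-(a * t)) * (y 0 - b) := by
    rw [Real.exp_neg]
    field_simp
    linarith [h]
  linarith [this]

/-- If `κ = diag(κᵢ)` is nonnegative diagonal, `c` is a correlation matrix and `κc + cκ` is
PSD, then any solution of `x' = κ(c - x) + (c - x)κ` starting from a correlation matrix stays
in the set of correlation matrices for all `t ≥ 0`. -/
theorem stmt9 (d : ℕ) (k : Fin d → ℝ) (hk : ∀ i, 0 ≤ k i)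
    (c : Matrix (Fin d) (Fin d) ℝ) (hc : IsCorrelation c)
    (hpsd : (Matrix.diagonal k * c + c * Matrix.diagonal k).PosSemidef)
    (x : ℝ → Matrix (Fin d) (Fin d) ℝ) (hx0 : IsCorrelation (x 0))
    (hode : ∀ (t : ℝ) (i j : Fin d), HasDerivAt (fun s => x s i j)
      ((Matrix.diagonal k * (c - x t) + (c - x t) * Matrix.diagonal k) i j) t) :
    ∀ t ≥ (0 : ℝ), IsCorrelation (x t) := by
  -- explicit solution formula
  have hsol : ∀ (t : ℝ) (i j : Fin d),
      x t i j = c i j + Real.exp (-((k i + k j) * t)) * (x 0 i j - c i j) := by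
    intro t i j
    refine scalar_sol (k i + k j) (c i j) (fun s => x s i j) ?_ t
    intro s
    have h := hode s i j
    convert h using 1
    simp [Matrix.add_apply, Matrix.diagonal_mul, Matrix.mul_diagonal, Matrix.sub_apply]
    ring
  intro t ht
  have hcH : ∀ i j, c i j = c j i := fun i j => hc.1.1.apply j i ▸ (by simp [hc.1.1.apply i j])
  have hx0H : ∀ i j, x 0 i j = x 0 j i := fun i j => by
    have h := congrFun (congrFun hx0.1.1 j) i
    simpa [Matrix.conjTranspose_apply] using h
  -- Hermitian
  have hherm : (x t).IsHermitian := by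
    ext i j
    simp only [Matrix.conjTranspose_apply, star_trivial]
    rw [hsol t i j, hsol t j i, hcH j i, hx0H j i]
    ring_nf
  refine ⟨Matrix.PosSemidef.of_dotProduct_mulVec_nonneg hherm ?_, ?_⟩
  · -- PSD
    intro v
    simp only [star_trivial]
    -- w is the conjugated vector
    set w : Fin d → ℝ := fun i => Real.exp (-(k i * t)) * v i with hw
    -- g s = quadratic form of the "integral" part
    set g : ℝ → ℝ :=
      fun s => ∑ i, ∑ j, w i * w j * c i j * (Real.exp ((k i + k j) * s) - 1) with hg
    have hg0 : g 0 = 0 := by simp [hg]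
    have hgd : ∀ s, HasDerivAt g
        (∑ i, ∑ j, w i * w j * c i j * ((k i + k j) * Real.exp ((k i + k j) * s))) s := by
      intro s
      refine HasDerivAt.fun_sum fun i _ => ?_
      refine HasDerivAt.fun_sum fun j _ => ?_
      have h1 : HasDerivAt (fun u : ℝ => (k i + k j) * u) (k i + k j) s := by
        simpa using (hasDerivAt_id s).const_mul (k i + k j)
      have h2 := (h1.exp.sub_const 1).const_mul (w i * w j * c i j)
      convert h2 using 1
      all_goals first | rfl | ring
    have hgd_nonneg : ∀ s, 0 ≤ ∑ i, ∑ j, w i * w j * c i j *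
        ((k i + k j) * Real.exp ((k i + k j) * s)) := by
      intro s
      set u : Fin d → ℝ := fun i => Real.exp (k i * s) * w i with hu
      have h := hpsd.dotProduct_mulVec_nonneg u
      simp only [star_trivial, dotProduct, Matrix.mulVec, Matrix.add_apply,
        Matrix.diagonal_mul, Matrix.mul_diagonal, dotProduct] at h
      calc (0:ℝ) ≤ ∑ i, u i * ∑ j, (k i * c i j + c i j * k j) * u j := h
        _ = ∑ i, ∑ j, w i * w j * c i j * ((k i + k j) * Real.exp ((k i + k j) * s)) := by
            refine Finset.sum_congr rfl fun i _ => ?_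
            rw [Finset.mul_sum]
            refine Finset.sum_congr rfl fun j _ => ?_
            simp only [hu]
            rw [show Real.exp ((k i + k j) * s) = Real.exp (k i * s) * Real.exp (k j * s) by
              rw [← Real.exp_add]; ring_nf]
            ring
    have hmono : Monotone g :=
      monotone_of_deriv_nonneg (fun s => (hgd s).differentiableAt)
        (fun s => by rw [(hgd s).deriv]; exact hgd_nonneg s)
    have hgt : 0 ≤ g t := hg0 ▸ hmono ht
    have hx0q : 0 ≤ ∑ i, ∑ j, w i * x 0 i j * w j := by
      have h := hx0.1.dotProduct_mulVec_nonneg w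
      simpa [star_trivial, dotProduct, Matrix.mulVec, Finset.mul_sum, mul_assoc] using h
    have key : dotProduct v ((x t) *ᵥ v)
        = (∑ i, ∑ j, w i * x 0 i j * w j) + g t := by
      simp only [dotProduct, Matrix.mulVec, dotProduct, hg]
      rw [← Finset.sum_add_distrib]
      refine Finset.sum_congr rfl fun i _ => ?_
      rw [Finset.mul_sum, ← Finset.sum_add_distrib]
      refine Finset.sum_congr rfl fun j _ => ?_
      rw [hsol t i j]
      simp only [hw]
      have e1 : Real.exp (-((k i + k j) * t))
          = Real.exp (-(k i * t)) * Real.exp (-(k j * t)) := by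
        rw [← Real.exp_add]; ring_nf
      have e2 : Real.exp (-(k i * t)) * Real.exp (-(k j * t)) * Real.exp ((k i + k j) * t)
          = 1 := by
        rw [← Real.exp_add, ← Real.exp_add]; ring_nf; exact Real.exp_zero
      rw [e1]
      linear_combination (-(v i * v j * c i j)) * e2
    rw [key]
    linarith
  · -- unit diagonal
    intro i
    rw [hsol t i i, hc.2 i, hx0.2 i]
    ring
end

section
/- Let b be a d×d real symmetric matrix and κ a d×d real matrix such that the linear ODE x'(t) = b − (κ x(t) + x(t) κ^T) maps every initial correlation matrix to a curve of correlation matrices for all t ≥ 0. Then κ is necessarily diagonal, κ_i + κ_j ≥ 0 for all i ≠ j, and there exists a correlation matrix c with b = κc + cκ. -/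
open Matrix

open intervalIntegral

section
variable {d : ℕ}

attribute [local instance] Matrix.linftyOpNormedRing Matrix.linftyOpNormedAlgebra

noncomputable def entryCLM (i j : Fin d) : Matrix (Fin d) (Fin d) ℝ →L[ℝ] ℝ :=
  LinearMap.toContinuousLinearMap (Matrix.entryLinearMap ℝ ℝ i j)

@[simp] lemma entryCLM_apply (i j : Fin d) (M : Matrix (Fin d) (Fin d) ℝ) :
    entryCLM i j M = M i j := rfl

noncomputable def transCLM : Matrix (Fin d) (Fin d) ℝ →L[ℝ] Matrix (Fin d) (Fin d) ℝ :=
  LinearMap.toContinuousLinearMap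
    (Matrix.transposeLinearEquiv (Fin d) (Fin d) ℝ ℝ).toLinearMap

@[simp] lemma transCLM_apply (M : Matrix (Fin d) (Fin d) ℝ) : transCLM M = Mᵀ := rfl

lemma sol_exists (b κ : Matrix (Fin d) (Fin d) ℝ) (x0 : Matrix (Fin d) (Fin d) ℝ) :
    ∃ x : ℝ → Matrix (Fin d) (Fin d) ℝ, x 0 = x0 ∧
      ∀ (t : ℝ) (i j : Fin d), HasDerivAt (fun s => x s i j)
        ((b - (κ * x t + x t * κᵀ)) i j) t := by
  classical
  set A : Matrix (Fin d) (Fin d) ℝ := -κ with hA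
  set φ : ℝ → Matrix (Fin d) (Fin d) ℝ := fun t => NormedSpace.exp (t • A) with hφ
  set ψ : ℝ → Matrix (Fin d) (Fin d) ℝ := fun t => NormedSpace.exp (t • κ) with hψ
  have hφd : ∀ t, HasDerivAt φ (A * φ t) t := fun t => hasDerivAt_exp_smul_const' A t
  have hψd : ∀ t, HasDerivAt ψ (κ * ψ t) t := fun t => hasDerivAt_exp_smul_const' κ t
  have hφψ : ∀ t, φ t * ψ t = 1 := by
    intro t
    have hc : Commute (t • A) (t • κ) := by
      simp only [hA, smul_mul_smul_comm, Commute, SemiconjBy, neg_mul, mul_neg]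
    rw [hφ, hψ]; dsimp only; rw [← Matrix.exp_add_of_commute _ _ hc]
    have : t • A + t • κ = 0 := by simp [hA]
    rw [this, NormedSpace.exp_zero]
  -- integrand
  set g : ℝ → Matrix (Fin d) (Fin d) ℝ := fun s => ψ s * b * (ψ s)ᵀ with hg
  have hψc : Continuous ψ := by
    have : Differentiable ℝ ψ := fun t => (hψd t).differentiableAt
    exact this.continuous
  have hgc : Continuous g := by
    apply ((hψc.mul continuous_const).mul _)
    exact transCLM.continuous.comp hψc
  set Q : ℝ → Matrix (Fin d) (Fin d) ℝ := fun t => ∫ s in (0:ℝ)..t, g s with hQ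
  have hQd : ∀ t, HasDerivAt Q (g t) t := by
    intro t
    exact intervalIntegral.integral_hasDerivAt_right
      (hgc.intervalIntegrable _ _)
      (by haveI : TopologicalSpace.PseudoMetrizableSpace (Matrix (Fin d) (Fin d) ℝ) := inferInstanceAs (TopologicalSpace.PseudoMetrizableSpace (Fin d → Fin d → ℝ)); exact hgc.stronglyMeasurableAtFilter _ _)
      hgc.continuousAt
  set x : ℝ → Matrix (Fin d) (Fin d) ℝ := fun t => φ t * (x0 + Q t) * (φ t)ᵀ with hx
  have hx0 : x 0 = x0 := by
    simp only [hx, hφ, hQ]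
    rw [zero_smul, NormedSpace.exp_zero, intervalIntegral.integral_same]
    simp
  refine ⟨x, hx0, ?_⟩
  intro t i j
  -- matrix-valued derivative
  have hφTd : ∀ t, HasDerivAt (fun s => (φ s)ᵀ) ((A * φ t)ᵀ) t := by
    intro t
    have := (transCLM.hasFDerivAt (x := φ t)).comp_hasDerivAt t (hφd t)
    exact this
  have hFd : HasDerivAt (fun s => φ s * (x0 + Q s))
      (A * φ t * (x0 + Q t) + φ t * g t) t :=
    by have h := (hφd t).mul ((hasDerivAt_const t x0).add (hQd t)); simp only [zero_add] at h; exact h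
  have hXd : HasDerivAt x
      ((A * φ t * (x0 + Q t) + φ t * g t) * (φ t)ᵀ
        + φ t * (x0 + Q t) * (A * φ t)ᵀ) t := hFd.mul (hφTd t)
  -- identify derivative
  have hder : (A * φ t * (x0 + Q t) + φ t * g t) * (φ t)ᵀ
        + φ t * (x0 + Q t) * (A * φ t)ᵀ
      = b - (κ * x t + x t * κᵀ) := by
    have h1 : φ t * g t * (φ t)ᵀ = b := by
      have h2 : (ψ t)ᵀ * (φ t)ᵀ = 1 := by
        rw [← Matrix.transpose_mul, hφψ t, Matrix.transpose_one]
      calc φ t * g t * (φ t)ᵀ = (φ t * ψ t) * b * ((ψ t)ᵀ * (φ t)ᵀ) := by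
            simp only [hg, mul_assoc]
        _ = b := by rw [hφψ t, h2, one_mul, mul_one]
    have hxt : x t = φ t * (x0 + Q t) * (φ t)ᵀ := rfl
    rw [add_mul, h1, Matrix.transpose_mul, hA]
    rw [hxt]
    simp only [Matrix.transpose_neg, Matrix.neg_mul, Matrix.mul_neg, mul_assoc,
      sub_eq_add_neg]
    abel
  rw [← hder]
  have := (entryCLM i j).hasFDerivAt.comp_hasDerivAt t hXd
  exact this

end

lemma deriv_zero_of_const_Ici {f : ℝ → ℝ} {D : ℝ} (hf : HasDerivAt f D 0)
    (hc : ∀ t ≥ (0:ℝ), f t = 1) : D = 0 := by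
  have hu : UniqueDiffWithinAt ℝ (Set.Ici (0:ℝ)) 0 :=
    uniqueDiffOn_Ici 0 0 Set.self_mem_Ici
  have h1 : HasDerivWithinAt (fun _ : ℝ => (1:ℝ)) D (Set.Ici 0) 0 :=
    (hf.hasDerivWithinAt).congr (fun y hy => (hc y hy).symm) ((hc 0 le_rfl).symm)
  have h2 : HasDerivWithinAt (fun _ : ℝ => (1:ℝ)) 0 (Set.Ici 0) 0 :=
    hasDerivWithinAt_const _ _ _
  exact (h1.derivWithin hu).symm.trans (h2.derivWithin hu)

lemma ode_sol {f : ℝ → ℝ} {β lam : ℝ} (hlam : lam ≠ 0)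
    (hf : ∀ t, HasDerivAt f (β - lam * f t) t) :
    ∀ t, f t = β/lam + (f 0 - β/lam) * Real.exp (-(lam*t)) := by
  have key : ∀ t, (f t - β/lam) * Real.exp (lam*t) = f 0 - β/lam := by
    intro t
    set g : ℝ → ℝ := fun t => (f t - β/lam) * Real.exp (lam*t) with hgdef
    have hg : ∀ s, HasDerivAt g 0 s := by
      intro s
      have h1 : HasDerivAt (fun t => f t - β/lam) (β - lam * f s) s := (hf s).sub_const _
      have h2 : HasDerivAt (fun t => Real.exp (lam*t)) (lam * Real.exp (lam*s)) s := by
        simpa [mul_comm, Function.comp_def] using (Real.hasDerivAt_exp (lam*s)).comp s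
          ((hasDerivAt_id s).const_mul lam)
      have h3 := h1.fun_mul h2
      convert h3 using 1
      all_goals try rfl
      field_simp
      ring
    have hconst : g t = g 0 :=
      is_const_of_deriv_eq_zero (fun s => (hg s).differentiableAt)
        (fun s => (hg s).deriv) t 0
    simpa [hgdef] using hconst
  intro t
  have h := key t
  have hexp : Real.exp (lam*t) ≠ 0 := Real.exp_ne_zero _
  have h2 : (f 0 - β/lam) / Real.exp (lam*t) = f t - β/lam := by
    rw [div_eq_iff hexp]; exact h.symm
  rw [Real.exp_neg, ← div_eq_mul_inv, h2]; ring

lemma ode_sol_zero {f : ℝ → ℝ} {β : ℝ} (hf : ∀ t, HasDerivAt f β t) :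
    ∀ t, f t = f 0 + β * t := by
  have key : ∀ t, f t - β * t = f 0 := by
    intro t
    set g : ℝ → ℝ := fun t => f t - β * t with hgdef
    have hg : ∀ s, HasDerivAt g 0 s := by
      intro s
      have h1 := (hf s).fun_sub (((hasDerivAt_id s).const_mul β))
      simpa [mul_comm] using h1
    have hconst : g t = g 0 :=
      is_const_of_deriv_eq_zero (fun s => (hg s).differentiableAt)
        (fun s => (hg s).deriv) t 0
    simpa [hgdef] using hconst
  intro t
  have := key t
  linarith

lemma abs_entry_le_one {d : ℕ} {x : Matrix (Fin d) (Fin d) ℝ} (hx : IsCorrelation x)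
    (i j : Fin d) : |x i j| ≤ 1 := by
  obtain ⟨⟨hherm, hpsd⟩, hdiag⟩ := And.imp_left Matrix.posSemidef_iff_dotProduct_mulVec.mp hx
  rcases eq_or_ne i j with rfl | hij
  · rw [hdiag i]; norm_num
  have hsym : x j i = x i j := by
    have := congrFun (congrFun hherm j) i
    simpa [Matrix.conjTranspose_apply] using this.symm
  have hplus := hpsd (Pi.single i 1 + Pi.single j 1)
  have hminus := hpsd (Pi.single i 1 - Pi.single j 1)
  simp only [star_trivial, Matrix.mulVec_add, Matrix.mulVec_sub, Matrix.mulVec_single,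
    dotProduct_add, dotProduct_sub, add_dotProduct, sub_dotProduct,
    single_dotProduct, one_mul, Pi.add_apply, Pi.sub_apply] at hplus hminus
  simp only [mul_one, hdiag, hsym, MulOpposite.op_one, one_smul, Matrix.col_apply] at hplus hminus
  rw [abs_le]
  exact ⟨by linarith, by linarith⟩

lemma vvT_correlation {d : ℕ} (v : Fin d → ℝ) (hv : ∀ k, v k = 1 ∨ v k = -1) :
    IsCorrelation (Matrix.vecMulVec v v) := by
  refine ⟨Matrix.posSemidef_iff_dotProduct_mulVec.mpr ⟨?_, ?_⟩, ?_⟩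
  · ext i j
    simp [Matrix.conjTranspose_apply, Matrix.vecMulVec_apply, mul_comm]
  · intro y
    have hmv : ∀ k, (Matrix.vecMulVec v v *ᵥ y) k = v k * ∑ l, v l * y l := by
      intro k
      simp [Matrix.mulVec, dotProduct, Matrix.vecMulVec_apply, Finset.mul_sum, mul_assoc]
    have : star y ⬝ᵥ (Matrix.vecMulVec v v *ᵥ y) = (∑ l, v l * y l)^2 := by
      simp only [star_trivial, dotProduct]
      rw [Finset.sum_congr rfl fun k _ => by rw [hmv k]]
      rw [show ∀ S : ℝ, (∑ k, y k * (v k * S)) = (∑ k, v k * y k) * S from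
        fun S => by rw [Finset.sum_mul]; exact Finset.sum_congr rfl fun k _ => by ring, sq]
    rw [this]
    positivity
  · intro i
    rcases hv i with h | h <;> simp [Matrix.vecMulVec_apply, h]

lemma ode_unbounded {f : ℝ → ℝ} {β lam : ℝ} (hlam : lam < 0)
    (hf : ∀ t, HasDerivAt f (β - lam * f t) t)
    (hne : f 0 ≠ β / lam) (hb : ∀ t ≥ (0:ℝ), |f t| ≤ 1) : False := by
  set c := β / lam with hc
  set a := f 0 - c with ha
  have ha0 : a ≠ 0 := sub_ne_zero.mpr hne
  have haa : 0 < |a| := abs_pos.mpr ha0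
  have hsol := ode_sol (ne_of_lt hlam) hf
  set K : ℝ := (1 + |c|) / |a| with hK
  have hKpos : 0 ≤ K := by positivity
  set t : ℝ := Real.log (K + 1) / (-lam) with ht
  have hlog : 0 ≤ Real.log (K+1) := Real.log_nonneg (by linarith)
  have ht0 : 0 ≤ t := div_nonneg hlog (by linarith)
  have hexp : Real.exp (-(lam * t)) = K + 1 := by
    have harg : -(lam*t) = Real.log (K+1) := by
      rw [ht]; field_simp
      exact mul_div_cancel_left₀ _ (ne_of_lt hlam)
    rw [harg]
    exact Real.exp_log (by linarith)
  have hble := hb t ht0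
  rw [hsol t, hexp] at hble
  have h1 : |a| * K = 1 + |c| := by
    rw [hK]; field_simp
  have h2 : |a * (K+1)| = |a| * K + |a| := by
    rw [abs_mul, abs_of_nonneg (by linarith : (0:ℝ) ≤ K+1)]; ring
  have h3 : |a * (K+1)| - |c| ≤ |c + a*(K+1)| := by
    have := abs_add_le (c + a*(K+1)) (-c)
    have he : c + a*(K+1) + -c = a*(K+1) := by ring
    rw [he, abs_neg] at this
    linarith
  have h4 : |c + a * (K+1)| ≤ 1 := by simpa [hc, ha] using hble
  linarith

lemma ode_zero_bounded {f : ℝ → ℝ} {β : ℝ} (hf : ∀ t, HasDerivAt f β t)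
    (h0 : |f 0| ≤ 1) (hb : ∀ t ≥ (0:ℝ), |f t| ≤ 1) : β = 0 := by
  by_contra hβ
  have habs : 0 < |β| := abs_pos.mpr hβ
  set t : ℝ := 3 / |β| with ht
  have ht0 : 0 ≤ t := by positivity
  have hble := hb t ht0
  rw [ode_sol_zero hf t] at hble
  have h2 : |β * t| = 3 := by
    rw [abs_mul, abs_of_nonneg ht0, ht]
    field_simp
  have h3 : |β * t| - |f 0| ≤ |f 0 + β * t| := by
    have := abs_add_le (f 0 + β * t) (-(f 0))
    simp only [abs_neg] at this
    have he : f 0 + β * t + -(f 0) = β * t := by ring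
    rw [he] at this
    linarith
  linarith

/-- If every solution of the linear ODE `x' = b - (κ x + x κᵀ)` starting from a correlation
matrix stays in the set of correlation matrices, then `κ` is diagonal, `κᵢ + κⱼ ≥ 0` for
`i ≠ j`, and `b = κ c + c κ` for some correlation matrix `c`. -/
theorem stmt10 (d : ℕ) (b κ : Matrix (Fin d) (Fin d) ℝ) (hb : b.IsSymm)
    (hpres : ∀ x : ℝ → Matrix (Fin d) (Fin d) ℝ,
      IsCorrelation (x 0) →
      (∀ (t : ℝ) (i j : Fin d), HasDerivAt (fun s => x s i j)
        ((b - (κ * x t + x t * κᵀ)) i j) t) →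
      ∀ t ≥ (0 : ℝ), IsCorrelation (x t)) :
    (∀ i j, i ≠ j → κ i j = 0) ∧
    (∀ i j, i ≠ j → 0 ≤ κ i i + κ j j) ∧
    ∃ c : Matrix (Fin d) (Fin d) ℝ, IsCorrelation c ∧ b = κ * c + c * κ := by
  classical
  -- Step A : diagonal constraint for sign vectors
  have keyA : ∀ v : Fin d → ℝ, (∀ k, v k = 1 ∨ v k = -1) →
      ∀ i : Fin d, b i i = 2 * ∑ k, κ i k * (v k * v i) := by
    intro v hv i
    obtain ⟨x, hx0, hxd⟩ := sol_exists b κ (Matrix.vecMulVec v v)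
    have hcorr := hpres x (by rw [hx0]; exact vvT_correlation v hv) hxd
    have hder := hxd 0 i i
    rw [hx0] at hder
    have hD := deriv_zero_of_const_Ici hder (fun t ht => (hcorr t ht).2 i)
    have hexpand : (b - (κ * Matrix.vecMulVec v v + Matrix.vecMulVec v v * κᵀ)) i i
        = b i i - (∑ k, κ i k * (v k * v i) + ∑ k, v i * v k * κᵀ k i) := by
      simp [Matrix.sub_apply, Matrix.add_apply, Matrix.mul_apply, Matrix.vecMulVec_apply]
    have hsum2 : ∑ k, v i * v k * κᵀ k i = ∑ k, κ i k * (v k * v i) :=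
      Finset.sum_congr rfl fun k _ => by rw [Matrix.transpose_apply]; ring
    rw [hexpand, hsum2] at hD
    linarith
  -- Step 1 : κ is diagonal
  have hoff : ∀ i j : Fin d, i ≠ j → κ i j = 0 := by
    intro i j hij
    have E1 := keyA (fun _ => 1) (fun _ => Or.inl rfl) i
    simp only [one_mul, mul_one] at E1
    set v2 : Fin d → ℝ := fun k => if k = j then -1 else 1 with hv2
    have E2 := keyA v2 (fun k => by by_cases h : k = j <;> simp [hv2, h]) i
    have hv2i : v2 i = 1 := by simp [hv2, hij]
    have hS2 : ∑ k, κ i k * (v2 k * v2 i) = (∑ k, κ i k) - 2 * κ i j := by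
      rw [Finset.sum_congr rfl (fun k _ => show κ i k * (v2 k * v2 i)
          = κ i k - (if k = j then 2 * κ i k else 0) by
        rw [hv2i]; by_cases h : k = j <;> simp [hv2, h] <;> ring)]
      rw [Finset.sum_sub_distrib, Finset.sum_ite_eq' Finset.univ j (fun k => 2 * κ i k)]
      simp
    rw [hS2] at E2
    linarith
  have hdiagb : ∀ i, b i i = 2 * κ i i := by
    intro i
    have E1 := keyA (fun _ => 1) (fun _ => Or.inl rfl) i
    simp only [one_mul, mul_one] at E1
    rw [Finset.sum_eq_single i (fun k _ hk => hoff i k (Ne.symm hk)) (by simp)] at E1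
    exact E1
  -- entrywise scalar ODE
  have hentry : ∀ (x : ℝ → Matrix (Fin d) (Fin d) ℝ),
      (∀ (t : ℝ) (i j : Fin d), HasDerivAt (fun s => x s i j)
        ((b - (κ * x t + x t * κᵀ)) i j) t) →
      ∀ i j : Fin d, i ≠ j → ∀ t, HasDerivAt (fun s => x s i j)
        (b i j - (κ i i + κ j j) * x t i j) t := by
    intro x hxd i j hij t
    have h := hxd t i j
    have hrw : (b - (κ * x t + x t * κᵀ)) i j = b i j - (κ i i + κ j j) * x t i j := by
      simp only [Matrix.sub_apply, Matrix.add_apply, Matrix.mul_apply, Matrix.transpose_apply]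
      rw [Finset.sum_eq_single i (fun k _ hk => by rw [hoff i k (Ne.symm hk), zero_mul])
          (by simp),
        Finset.sum_eq_single j (fun k _ hk => by rw [hoff j k (Ne.symm hk), mul_zero])
          (by simp)]
      ring
    rwa [hrw] at h
  -- Step 2 : κᵢᵢ + κⱼⱼ ≥ 0 off-diagonal
  have hsum_nonneg : ∀ i j : Fin d, i ≠ j → 0 ≤ κ i i + κ j j := by
    intro i j hij
    by_contra hneg
    push_neg at hneg
    by_cases hcase : b i j / (κ i i + κ j j) = 1
    · -- start from x0 with entry -1
      set v2 : Fin d → ℝ := fun k => if k = j then -1 else 1 with hv2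
      obtain ⟨x, hx0, hxd⟩ := sol_exists b κ (Matrix.vecMulVec v2 v2)
      have hcorr := hpres x
        (by rw [hx0]; exact vvT_correlation v2 (fun k => by by_cases h : k = j <;> simp [hv2, h]))
        hxd
      have hf := hentry x hxd i j hij
      have hf0 : x 0 i j = -1 := by
        rw [hx0]; simp [Matrix.vecMulVec_apply, hv2, hij]
      exact ode_unbounded hneg hf (by rw [hf0, hcase]; norm_num)
        (fun t ht => abs_entry_le_one (hcorr t ht) i j)
    · -- start from all-ones
      obtain ⟨x, hx0, hxd⟩ := sol_exists b κ (Matrix.vecMulVec (fun _ => 1) (fun _ => 1))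
      have hcorr := hpres x
        (by rw [hx0]; exact vvT_correlation _ (fun _ => Or.inl rfl)) hxd
      have hf := hentry x hxd i j hij
      have hf0 : x 0 i j = 1 := by rw [hx0]; simp [Matrix.vecMulVec_apply]
      exact ode_unbounded hneg hf (by rw [hf0]; exact fun h => hcase h.symm)
        (fun t ht => abs_entry_le_one (hcorr t ht) i j)
  refine ⟨hoff, hsum_nonneg, ?_⟩
  -- Step 3 : the limit correlation matrix
  obtain ⟨x, hx0, hxd⟩ := sol_exists b κ (1 : Matrix (Fin d) (Fin d) ℝ)
  have hIcorr : IsCorrelation (1 : Matrix (Fin d) (Fin d) ℝ) :=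
    ⟨Matrix.PosSemidef.one, fun i => Matrix.one_apply_eq i⟩
  have hcorr := hpres x (by rw [hx0]; exact hIcorr) hxd
  have hx0e : ∀ i j : Fin d, i ≠ j → x 0 i j = 0 := by
    intro i j hij; rw [hx0]; exact Matrix.one_apply_ne hij
  have hb0 : ∀ i j : Fin d, i ≠ j → κ i i + κ j j = 0 → b i j = 0 := by
    intro i j hij h0
    have hf : ∀ t, HasDerivAt (fun s => x s i j) (b i j) t := by
      intro t
      have := hentry x hxd i j hij t
      rwa [h0, zero_mul, sub_zero] at this
    exact ode_zero_bounded hf (by rw [hx0e i j hij]; norm_num)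
      (fun t ht => abs_entry_le_one (hcorr t ht) i j)
  set c : Matrix (Fin d) (Fin d) ℝ :=
    Matrix.of fun i j => if i = j then (1:ℝ) else b i j / (κ i i + κ j j) with hcdef
  have hcd : ∀ i, c i i = 1 := fun i => by simp [hcdef]
  have hcod : ∀ i j, i ≠ j → c i j = b i j / (κ i i + κ j j) := by
    intro i j hij; simp [hcdef, hij]
  -- entrywise convergence
  have htend : ∀ i j : Fin d, Filter.Tendsto (fun t => x t i j) Filter.atTop (nhds (c i j)) := by
    intro i j
    by_cases hij : i = j
    · subst hij
      rw [hcd i]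
      refine Filter.Tendsto.congr' ?_ tendsto_const_nhds
      filter_upwards [Filter.eventually_ge_atTop (0:ℝ)] with t ht
      exact ((hcorr t ht).2 i).symm
    · rcases eq_or_lt_of_le (hsum_nonneg i j hij) with h0 | hpos
      · have hbz := hb0 i j hij h0.symm
        have hf : ∀ t, HasDerivAt (fun s => x s i j) (b i j) t := by
          intro t
          have := hentry x hxd i j hij t
          rwa [← h0, zero_mul, sub_zero] at this
        have hsol := ode_sol_zero hf
        rw [hcod i j hij, hbz, zero_div]
        refine Filter.Tendsto.congr (fun t => ?_) tendsto_const_nhds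
        rw [hsol t, hx0e i j hij, hbz]; ring
      · have hf := hentry x hxd i j hij
        have hsol := ode_sol (ne_of_gt hpos) hf
        have hexp : Filter.Tendsto (fun t => Real.exp (-((κ i i + κ j j) * t)))
            Filter.atTop (nhds 0) := by
          have h1 : Filter.Tendsto (fun t : ℝ => (κ i i + κ j j) * t)
              Filter.atTop Filter.atTop :=
            (Filter.tendsto_const_mul_atTop_of_pos hpos).2 Filter.tendsto_id
          exact Real.tendsto_exp_neg_atTop_nhds_zero.comp h1
        have hlim : Filter.Tendsto
            (fun t => b i j / (κ i i + κ j j)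
              + (x 0 i j - b i j / (κ i i + κ j j)) * Real.exp (-((κ i i + κ j j) * t)))
            Filter.atTop (nhds (c i j)) := by
          rw [hcod i j hij]
          have := (tendsto_const_nhds (x := b i j / (κ i i + κ j j))
            (f := Filter.atTop (α := ℝ))).add
            ((tendsto_const_nhds (x := x 0 i j - b i j / (κ i i + κ j j))
              (f := Filter.atTop (α := ℝ))).mul hexp)
          simpa using this
        exact Filter.Tendsto.congr (fun t => (hsol t).symm) hlim
  -- PSD of c
  have hherm : c.IsHermitian := by
    ext i j
    simp only [Matrix.conjTranspose_apply, star_trivial]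
    by_cases hij : i = j
    · subst hij; rfl
    · rw [hcod j i (Ne.symm hij), hcod i j hij, hb.apply i j, add_comm]
  have hpsd : c.PosSemidef := by
    refine Matrix.posSemidef_iff_dotProduct_mulVec.mpr ⟨hherm, fun y => ?_⟩
    have hg : Filter.Tendsto (fun t => ∑ i, y i * ∑ j, x t i j * y j)
        Filter.atTop (nhds (∑ i, y i * ∑ j, c i j * y j)) := by
      refine tendsto_finset_sum _ (fun i _ => Filter.Tendsto.const_mul _ ?_)
      exact tendsto_finset_sum _ (fun j _ => (htend i j).mul_const _)
    have hev : ∀ᶠ t in Filter.atTop, 0 ≤ ∑ i, y i * ∑ j, x t i j * y j := by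
      filter_upwards [Filter.eventually_ge_atTop (0:ℝ)] with t ht
      have := (hcorr t ht).1.dotProduct_mulVec_nonneg y
      simpa [Matrix.mulVec, dotProduct] using this
    have hlim := ge_of_tendsto hg hev
    simpa [Matrix.mulVec, dotProduct] using hlim
  refine ⟨c, ⟨hpsd, hcd⟩, ?_⟩
  ext i j
  rw [Matrix.add_apply, Matrix.mul_apply, Matrix.mul_apply,
    Finset.sum_eq_single i (fun k _ hk => by rw [hoff i k (Ne.symm hk), zero_mul]) (by simp),
    Finset.sum_eq_single j (fun k _ hk => by rw [hoff k j hk, mul_zero]) (by simp)]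
  by_cases hij : i = j
  · subst hij
    rw [hcd i, hdiagb i]; ring
  · rw [hcod i j hij]
    rcases eq_or_lt_of_le (hsum_nonneg i j hij) with h0 | hpos
    · rw [hb0 i j hij h0.symm]; simp
    · field_simp
end

section
/- Let κ¹, κ² be real diagonal d×d matrices and c¹, c² ∈ C_d(R) correlation matrices such that κ¹c¹ + c¹κ¹ + κ²c² + c²κ² is positive semidefinite. Set κ = κ¹ + κ², and define c by c_{ii} = 1 and, for i ≠ j, c_{ij} = ((κ¹_i+κ¹_j)c¹_{ij} + (κ²_i+κ²_j)c²_{ij})/(κ_i+κ_j) if κ_i+κ_j > 0, and c_{ij} = 0 otherwise. Then κ is positive semidefinite (i.e. has nonnegative diagonal), c is a correlation matrix, and κc + cκ = κ¹c¹ + c¹κ¹ + κ²c² + c²κ². -/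
open Matrix


lemma quadForm_eq {d : ℕ} (B : Matrix (Fin d) (Fin d) ℝ) (x : Fin d → ℝ) :
    dotProduct (star x) (B *ᵥ x) = ∑ i, ∑ j, x i * B i j * x j := by
  simp [dotProduct, mulVec, Finset.mul_sum, mul_assoc]

lemma psd_entry_zero {d : ℕ} {B : Matrix (Fin d) (Fin d) ℝ} (hB : B.PosSemidef)
    {i j : Fin d} (hi : B i i = 0) : B i j = 0 := by
  rcases eq_or_ne i j with rfl | hij
  · exact hi
  have hsym : B j i = B i j := by simpa using hB.1.apply i j
  by_contra h
  have hq : ∀ t : ℝ, 0 ≤ 2 * t * B i j + B j j := by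
    intro t
    have h0 := hB.dotProduct_mulVec_nonneg (Pi.single i t + Pi.single j 1)
    rw [star_trivial] at h0
    calc (0:ℝ) ≤ _ := h0
      _ = 2 * t * B i j + B j j := by
        simp only [mulVec_add, dotProduct_add, add_dotProduct, mulVec_single,
          single_dotProduct, dotProduct_single, Pi.add_apply, Pi.smul_apply, col_apply,
          op_smul_eq_mul]
        rw [hi, hsym]; ring
  have ht := hq (-(B j j + 1) / (2 * B i j))
  have h2 : 2 * (-(B j j + 1) / (2 * B i j)) * B i j = -(B j j + 1) := by
    field_simp
  linarith

/-- Combination of two mean-reversion data sets: if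
`κ¹c¹ + c¹κ¹ + κ²c² + c²κ²` is PSD, then `κ = κ¹ + κ²` is nonnegative, the weighted average
`c` is a correlation matrix, and `κc + cκ = κ¹c¹ + c¹κ¹ + κ²c² + c²κ²`. -/
theorem stmt11 (d : ℕ) (κ₁ κ₂ : Fin d → ℝ)
    (c₁ c₂ : Matrix (Fin d) (Fin d) ℝ) (hc₁ : IsCorrelation c₁) (hc₂ : IsCorrelation c₂)
    (hpsd : (Matrix.diagonal κ₁ * c₁ + c₁ * Matrix.diagonal κ₁ +
        (Matrix.diagonal κ₂ * c₂ + c₂ * Matrix.diagonal κ₂)).PosSemidef) :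
    ∀ k : Fin d → ℝ, k = (fun i => κ₁ i + κ₂ i) →
    ∀ c : Matrix (Fin d) (Fin d) ℝ,
      c = (Matrix.of fun i j =>
        if i = j then 1 else if 0 < k i + k j then
          ((κ₁ i + κ₁ j) * c₁ i j + (κ₂ i + κ₂ j) * c₂ i j) / (k i + k j)
        else 0) →
    (∀ i, 0 ≤ k i) ∧ IsCorrelation c ∧
      Matrix.diagonal k * c + c * Matrix.diagonal k =
        Matrix.diagonal κ₁ * c₁ + c₁ * Matrix.diagonal κ₁ +
          (Matrix.diagonal κ₂ * c₂ + c₂ * Matrix.diagonal κ₂) := by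
  obtain ⟨hc₁p, hc₁d⟩ := hc₁
  obtain ⟨hc₂p, hc₂d⟩ := hc₂
  intro k hk c hc
  set A : Matrix (Fin d) (Fin d) ℝ :=
    Matrix.diagonal κ₁ * c₁ + c₁ * Matrix.diagonal κ₁ +
      (Matrix.diagonal κ₂ * c₂ + c₂ * Matrix.diagonal κ₂) with hAdef
  have hki : ∀ i, k i = κ₁ i + κ₂ i := fun i => by rw [hk]
  have hAe : ∀ i j, A i j = (κ₁ i + κ₁ j) * c₁ i j + (κ₂ i + κ₂ j) * c₂ i j := by
    intro i j
    simp only [hAdef, Matrix.add_apply, Matrix.diagonal_mul, Matrix.mul_diagonal]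
    ring
  have hAd : ∀ i, A i i = 2 * k i := by
    intro i; rw [hAe, hc₁d, hc₂d, hki]; ring
  have hknn : ∀ i, 0 ≤ k i := by
    intro i
    have h0 := hpsd.dotProduct_mulVec_nonneg (Pi.single i 1)
    rw [star_trivial] at h0
    simp only [mulVec_single, single_dotProduct, Pi.smul_apply, col_apply, op_smul_eq_mul] at h0
    rw [hAd i] at h0
    linarith
  have hAsym : ∀ i j, A j i = A i j := fun i j => by simpa using hpsd.1.apply i j
  have hA0 : ∀ i j, k i = 0 ∨ k j = 0 → A i j = 0 := by
    intro i j hij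
    rcases hij with h | h
    · exact psd_entry_zero hpsd (by rw [hAd, h]; ring)
    · rw [← hAsym]
      exact psd_entry_zero hpsd (by rw [hAd, h]; ring)
  have hkz : ∀ i, ¬ 0 < k i → k i = 0 := fun i h => le_antisymm (not_lt.1 h) (hknn i)
  refine ⟨hknn, ⟨posSemidef_iff_dotProduct_mulVec.mpr ⟨?herm, ?pos⟩, ?diag⟩, ?eqn⟩
  case diag => intro i; rw [hc]; simp
  case eqn =>
    ext i j
    simp only [Matrix.add_apply, Matrix.diagonal_mul, Matrix.mul_diagonal]
    rw [hc]
    simp only [Matrix.of_apply]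
    by_cases hij : i = j
    · subst hij; rw [if_pos rfl, hAd]; ring
    · rw [if_neg hij]
      by_cases hpos : 0 < k i + k j
      · rw [if_pos hpos, hAe]
        have hs : k i + k j ≠ 0 := ne_of_gt hpos
        field_simp
      · have hki0 : k i = 0 := by
          linarith [hknn i, hknn j, not_lt.1 hpos]
        rw [if_neg hpos, hA0 i j (Or.inl hki0)]; ring
  case herm =>
    have hs1 : ∀ i j, c₁ j i = c₁ i j := fun i j => by simpa using hc₁p.1.apply i j
    have hs2 : ∀ i j, c₂ j i = c₂ i j := fun i j => by simpa using hc₂p.1.apply i j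
    ext i j
    rw [conjTranspose_apply, star_trivial, hc]
    simp only [Matrix.of_apply]
    rcases eq_or_ne i j with rfl | hij
    · rfl
    · rw [if_neg (Ne.symm hij), if_neg hij, hs1 i j, hs2 i j,
        add_comm (k j) (k i), add_comm (κ₁ j) (κ₁ i), add_comm (κ₂ j) (κ₂ i)]
  case pos =>
    set r : Fin d → ℝ := fun i => if 0 < k i then (1 - k i) / (1 + k i) else 0 with hrdef
    set g : Fin d → ℝ := fun i => if 0 < k i then Real.sqrt 2 / (1 + k i) else 0 with hgdef
    have hrabs : ∀ i, |r i| < 1 := by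
      intro i
      simp only [hrdef]
      split_ifs with h
      · have h1 : (0:ℝ) < 1 + k i := by linarith
        have h2 : |1 + k i| = 1 + k i := abs_of_pos h1
        rw [abs_div, h2, div_lt_one h1, abs_lt]
        constructor <;> linarith
      · simp
    have habs : ∀ i j, |r i * r j| < 1 := by
      intro i j; rw [abs_mul]
      nlinarith [abs_nonneg (r i), abs_nonneg (r j), hrabs i, hrabs j]
    have hgeo : ∀ i j, Summable (fun n : ℕ => (r i * r j) ^ n) :=
      fun i j => summable_geometric_of_abs_lt_one (habs i j)
    have h2 : Real.sqrt 2 * Real.sqrt 2 = 2 := Real.mul_self_sqrt (by norm_num)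
    have hentry : ∀ i j, c i j =
        A i j * (g i * g j * ∑' n : ℕ, (r i * r j) ^ n)
          + (if i = j ∧ ¬ 0 < k i then 1 else 0) := by
      intro i j
      rw [tsum_geometric_of_abs_lt_one (habs i j), hc]
      simp only [Matrix.of_apply]
      rcases eq_or_ne i j with rfl | hij
      · by_cases hi : 0 < k i
        · have hgi : g i = Real.sqrt 2 / (1 + k i) := by simp only [hgdef]; rw [if_pos hi]
          have hri : r i = (1 - k i) / (1 + k i) := by simp only [hrdef]; rw [if_pos hi]
          rw [if_pos rfl, hAd, hgi, hri, if_neg (fun hcon => hcon.2 hi)]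
          have h1k : (0:ℝ) < 1 + k i := by linarith
          have hd : 1 - (1 - k i) / (1 + k i) * ((1 - k i) / (1 + k i))
              = 4 * k i / ((1 + k i) * (1 + k i)) := by field_simp; ring
          rw [hd, add_zero]
          rw [div_mul_div_comm, h2]
          have h4 : (4 * k i / ((1 + k i) * (1 + k i)))⁻¹
              = (1 + k i) * (1 + k i) / (4 * k i) := by rw [inv_div]
          rw [h4]
          field_simp
          ring
        · rw [if_pos rfl, hA0 i i (Or.inl (hkz i hi)), if_pos ⟨rfl, hi⟩]; ring
      · rw [if_neg hij, if_neg (show ¬(i = j ∧ ¬ 0 < k i) from fun hcon => hij hcon.1), add_zero]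
        by_cases hi : 0 < k i <;> by_cases hj : 0 < k j
        · have hs : 0 < k i + k j := by linarith
          have hgi : g i = Real.sqrt 2 / (1 + k i) := by simp only [hgdef]; rw [if_pos hi]
          have hri : r i = (1 - k i) / (1 + k i) := by simp only [hrdef]; rw [if_pos hi]
          have hgj : g j = Real.sqrt 2 / (1 + k j) := by simp only [hgdef]; rw [if_pos hj]
          have hrj : r j = (1 - k j) / (1 + k j) := by simp only [hrdef]; rw [if_pos hj]
          rw [if_pos hs, ← hAe, hgi, hri, hgj, hrj]
          have h1i : (0:ℝ) < 1 + k i := by linarith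
          have h1j : (0:ℝ) < 1 + k j := by linarith
          have hd : 1 - (1 - k i) / (1 + k i) * ((1 - k j) / (1 + k j))
              = 2 * (k i + k j) / ((1 + k i) * (1 + k j)) := by field_simp; ring
          rw [hd, div_mul_div_comm, h2, inv_div]
          field_simp
        · have hkj : k j = 0 := hkz j hj
          have hs : 0 < k i + k j := by rw [hkj]; simpa
          rw [if_pos hs, ← hAe, hA0 i j (Or.inr hkj)]
          simp
        · have hki0 : k i = 0 := hkz i hi
          have hs : 0 < k i + k j := by rw [hki0]; simpa
          rw [if_pos hs, ← hAe, hA0 i j (Or.inl hki0)]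
          simp
        · have hs : ¬ 0 < k i + k j := by
            rw [hkz i hi, hkz j hj]; simp
          rw [if_neg hs, hA0 i j (Or.inl (hkz i hi))]
          ring
    intro x
    have hq0 := quadForm_eq c x
    rw [star_trivial] at hq0
    have hsumm : ∀ i j, Summable (fun n : ℕ =>
        (x i * g i * r i ^ n) * A i j * (x j * g j * r j ^ n)) := by
      intro i j
      exact ((hgeo i j).mul_left (x i * g i * (A i j * (x j * g j)))).congr
        (fun n => by rw [mul_pow]; ring)
    have h1 : ∀ i j, x i * c i j * x j =
        (∑' n : ℕ, (x i * g i * r i ^ n) * A i j * (x j * g j * r j ^ n))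
          + x i * (if i = j ∧ ¬ 0 < k i then 1 else 0) * x j := by
      intro i j
      have ht : (∑' n : ℕ, (x i * g i * r i ^ n) * A i j * (x j * g j * r j ^ n))
          = (x i * g i * (A i j * (x j * g j))) * ∑' n : ℕ, (r i * r j) ^ n := by
        rw [← tsum_mul_left]
        exact tsum_congr fun n => by rw [mul_pow]; ring
      rw [ht, hentry i j]; ring
    rw [star_trivial, hq0]
    simp only [h1]
    simp only [Finset.sum_add_distrib]
    apply add_nonneg
    · have e1 : ∀ i : Fin d,
          (∑ j, ∑' n : ℕ, (x i * g i * r i ^ n) * A i j * (x j * g j * r j ^ n))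
            = ∑' n : ℕ, ∑ j, (x i * g i * r i ^ n) * A i j * (x j * g j * r j ^ n) :=
        fun i => (Summable.tsum_finsetSum fun j _ => hsumm i j).symm
      rw [Finset.sum_congr rfl (fun i _ => e1 i),
        ← Summable.tsum_finsetSum (fun i (_ : i ∈ Finset.univ) => summable_sum (fun j _ => hsumm i j))]
      refine tsum_nonneg fun n => ?_
      have hq := quadForm_eq A (fun a => x a * g a * r a ^ n)
      rw [star_trivial] at hq
      have hnn := hpsd.dotProduct_mulVec_nonneg (fun a => x a * g a * r a ^ n)
      rw [star_trivial, hq] at hnn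
      exact hnn
    · refine Finset.sum_nonneg fun i _ => Finset.sum_nonneg fun j _ => ?_
      split_ifs with h
      · obtain ⟨rfl, -⟩ := h
        simpa using mul_self_nonneg (x i)
      · simp
end

section
/- For t ∈ [0, 2/5] and z ∈ [0,1], define m⁺ = z(1−z), m⁻ = t z(1+z)(1 + (t/2)(1 − 6z²)), and p(t,z) = 1 − 1/(1 + t(1+z)(1 + (t/2)(1−6z²))/(1−z)) (with p(t,1)=1). Then the random variable Ẑ taking value z + m⁺ with probability p(t,z) and z − m⁻ with probability 1 − p(t,z) satisfies: (i) z + m⁺ ≤ 1 and z − m⁻ ≥ 0, so Ẑ ∈ [0,1]; (ii) E[Ẑ] = z; (iii) E[Ẑ²] = z² + t z²(1−z²) + (t²/2) z²(1−z²)(1−6z²). -/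
/-- Moment-matching two-point scheme near `z = 1`: with `m⁺ = z(1-z)`,
`m⁻ = t z(1+z)(1 + (t/2)(1-6z²))` and probability `p(t,z)`, the two-point random variable
taking the values `z + m⁺` and `z - m⁻` with probabilities `p` and `1 - p` stays in `[0,1]`
and matches the first moment `z` and the prescribed second moment. -/
theorem stmt17 (t z : ℝ) (ht : t ∈ Set.Icc (0 : ℝ) (2 / 5)) (hz : z ∈ Set.Icc (0 : ℝ) 1)
    (mp mm p : ℝ)
    (hmp : mp = z * (1 - z))
    (hmm : mm = t * z * (1 + z) * (1 + t / 2 * (1 - 6 * z ^ 2)))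
    (hp : p = if z = 1 then 1
      else 1 - 1 / (1 + t * (1 + z) * (1 + t / 2 * (1 - 6 * z ^ 2)) / (1 - z))) :
    (0 ≤ p ∧ p ≤ 1) ∧
    (z + mp ≤ 1 ∧ 0 ≤ z - mm) ∧
    (p * (z + mp) + (1 - p) * (z - mm) = z) ∧
    (p * (z + mp) ^ 2 + (1 - p) * (z - mm) ^ 2
      = z ^ 2 + t * z ^ 2 * (1 - z ^ 2) + t ^ 2 / 2 * z ^ 2 * (1 - z ^ 2) * (1 - 6 * z ^ 2)) := by
  obtain ⟨ht0, ht1⟩ := ht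
  obtain ⟨hz0, hz1⟩ := hz
  have hz2 : z ^ 2 ≤ 1 := by nlinarith
  have htz : t * z ^ 2 ≤ t := by nlinarith
  have hB0 : 0 ≤ 1 + t / 2 * (1 - 6 * z ^ 2) := by nlinarith
  have hB1 : 1 + t / 2 * (1 - 6 * z ^ 2) ≤ 6 / 5 := by nlinarith [mul_nonneg ht0 (sq_nonneg z)]
  have hA0 : 0 ≤ t * (1 + z) * (1 + t / 2 * (1 - 6 * z ^ 2)) :=
    mul_nonneg (mul_nonneg ht0 (by linarith)) hB0
  have hA1 : t * (1 + z) * (1 + t / 2 * (1 - 6 * z ^ 2)) ≤ 1 := by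
    nlinarith [mul_nonneg (mul_nonneg ht0 hB0) (sub_nonneg.mpr hz1),
      mul_nonneg (sub_nonneg.mpr ht1) hB0, mul_nonneg ht0 (sub_nonneg.mpr hB1)]
  by_cases h1 : z = 1
  · subst h1
    rw [if_pos rfl] at hp
    subst hp hmp hmm
    refine ⟨by norm_num, ⟨by norm_num, by nlinarith [sq_nonneg (t - 1/5)]⟩, by ring, by ring⟩
  · have hd : 0 < 1 - z := lt_of_le_of_ne (by linarith) (fun h => h1 (by linarith))
    rw [if_neg h1] at hp
    set A := t * (1 + z) * (1 + t / 2 * (1 - 6 * z ^ 2)) with hA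
    have hD : 0 < (1 - z) + A := by linarith
    have hpval : p = A / ((1 - z) + A) := by
      have hne : (0:ℝ) < 1 + A / (1 - z) := by
        have := div_nonneg hA0 hd.le
        linarith
      rw [hp]
      field_simp [hd.ne', hne.ne', hD.ne']
      ring
    have hmm' : mm = z * A := by rw [hmm, hA]; ring
    refine ⟨⟨?_, ?_⟩, ⟨?_, ?_⟩, ?_, ?_⟩
    · rw [hpval]; exact div_nonneg hA0 hD.le
    · rw [hpval, div_le_one hD]; linarith
    · rw [hmp]; nlinarith
    · rw [hmm']; nlinarith [mul_nonneg hz0 (sub_nonneg.mpr hA1)]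
    · rw [hpval, hmp, hmm']
      field_simp
      ring
    · have hrhs : z ^ 2 + t * z ^ 2 * (1 - z ^ 2) + t ^ 2 / 2 * z ^ 2 * (1 - z ^ 2) * (1 - 6 * z ^ 2)
          = z ^ 2 + z ^ 2 * (1 - z) * A := by rw [hA]; ring
      rw [hrhs, hpval, hmp, hmm']
      field_simp
      ring
end
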